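/- Let κ ∈ ℕ₀ⁿ and m ≥ 0. Then h_m(y^{[κ]}) = Σ_{k∈ℕ₀ⁿ, |k|=m} (∏_{j=1}^n binomial(κ_j + k_j − 1, k_j)) · ∏_{j=1}^n y_j^{k_j}, as an identity in the polynomial ring F[y₁,…,yₙ]. -/

import Mathlib

open Finset

/-- Complete homogeneous polynomial of degree `m` in variables `x j`, `j : ι`. -/
noncomputable def homog {ι : Type*} [Fintype ι] [DecidableEq ι] {R : Type*} [CommSemiring R]
    (m : ℕ) (x : ι → R) : R :=
  ∑ k ∈ Finset.univ.piAntidiag m, ∏ j, x j ^ k j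

noncomputable def symEquivPiAntidiag (ι : Type*) [Fintype ι] [DecidableEq ι] (d : ℕ) :
    Sym ι d ≃ (Finset.univ.piAntidiag d : Finset (ι → ℕ)) where
  toFun m := ⟨fun i => Multiset.count i m.1, by
    simp only [mem_coe, mem_piAntidiag]
    exact ⟨by rw [Multiset.sum_count_eq_card (fun a _ => mem_univ a), m.2],
      fun i _ => mem_univ i⟩⟩
  invFun f := ⟨∑ i, (f : ι → ℕ) i • ({i} : Multiset ι), by
    have hf := (mem_piAntidiag.mp f.2).1
    rw [← Multiset.cardHom_apply, map_sum Multiset.cardHom]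
    simpa using hf⟩
  left_inv m := by
    ext1
    refine Multiset.ext.mpr fun a => ?_
    simp [Multiset.count_sum', Multiset.count_singleton]
  right_inv f := by
    ext a
    simp [Multiset.count_sum', Multiset.count_singleton]

lemma card_piAntidiag_univ (ι : Type*) [Fintype ι] [DecidableEq ι] (d : ℕ) :
    (Finset.univ.piAntidiag d : Finset (ι → ℕ)).card = (Fintype.card ι + d - 1).choose d := by
  classical
  rw [← Sym.card_sym_eq_choose (α := ι) d, ← Fintype.card_coe ((Finset.univ.piAntidiag d : Finset (ι → ℕ)))]
  exact (Fintype.card_congr (symEquivPiAntidiag ι d)).symm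

lemma fiber_card (n : ℕ) (κ : Fin n → ℕ) (m : ℕ) (d : Fin n → ℕ)
    (hd : d ∈ (Finset.univ.piAntidiag m : Finset (Fin n → ℕ))) :
    ((Finset.univ.piAntidiag m : Finset ((Σ s : Fin n, Fin (κ s)) → ℕ)).filter
      (fun k => (fun j => ∑ i, k ⟨j, i⟩) = d)).card
    = ∏ j, (κ j + d j - 1).choose (d j) := by
  classical
  have h1 : ((Finset.univ.piAntidiag m : Finset ((Σ s : Fin n, Fin (κ s)) → ℕ)).filter
      (fun k => (fun j => ∑ i, k ⟨j, i⟩) = d)).card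
      = (Fintype.piFinset fun j => (Finset.univ.piAntidiag (d j) : Finset (Fin (κ j) → ℕ))).card := by
    refine (Finset.card_bij' (fun k _ => fun j i => k ⟨j, i⟩)
      (fun g _ => fun p => g p.1 p.2) ?_ ?_ ?_ ?_)
    · intro k hk
      simp only [mem_filter, mem_piAntidiag] at hk
      rw [Fintype.mem_piFinset]
      intro j
      simp only [mem_piAntidiag]
      exact ⟨congrFun hk.2 j, fun i _ => mem_univ i⟩
    · intro g hg
      rw [Fintype.mem_piFinset] at hg
      simp only [mem_filter, mem_piAntidiag]
      refine ⟨⟨?_, fun p _ => mem_univ p⟩, ?_⟩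
      · rw [← Finset.univ_sigma_univ, Finset.sum_sigma]
        rw [mem_piAntidiag] at hd
        rw [← hd.1]
        exact Finset.sum_congr rfl fun j _ => (mem_piAntidiag.mp (hg j)).1
      · funext j
        exact (mem_piAntidiag.mp (hg j)).1
    · intro k _; funext p; cases p; rfl
    · intro g _; rfl
  rw [h1, Fintype.card_piFinset]
  exact Finset.prod_congr rfl fun j _ => by rw [card_piAntidiag_univ, Fintype.card_fin]

theorem stmt_7 (F : Type*) [Field F] [CharZero F] (n : ℕ) (κ : Fin n → ℕ) (m : ℕ) :
    homog m (fun p : Σ s : Fin n, Fin (κ s) => (MvPolynomial.X p.1 : MvPolynomial (Fin n) F))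
      = ∑ k ∈ (Finset.univ.piAntidiag m : Finset (Fin n → ℕ)),
          (∏ j, ((κ j + k j - 1).choose (k j) : MvPolynomial (Fin n) F))
            * ∏ j, MvPolynomial.X j ^ k j := by
  classical
  rw [homog]
  rw [← Finset.sum_fiberwise_of_maps_to
    (g := fun (k : (Σ s : Fin n, Fin (κ s)) → ℕ) => (fun j => ∑ i, k ⟨j, i⟩))
    (t := (Finset.univ.piAntidiag m : Finset (Fin n → ℕ)))
    (fun k hk => by
      simp only [mem_piAntidiag] at hk ⊢
      refine ⟨?_, fun j _ => mem_univ j⟩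
      rw [← hk.1, ← Finset.univ_sigma_univ, Finset.sum_sigma])
    (fun k => ∏ p : Σ s : Fin n, Fin (κ s), (MvPolynomial.X p.1 : MvPolynomial (Fin n) F) ^ k p)]
  refine Finset.sum_congr rfl fun d hd => ?_
  have hterm : ∀ k ∈ (Finset.univ.piAntidiag m :
      Finset ((Σ s : Fin n, Fin (κ s)) → ℕ)).filter (fun k => (fun j => ∑ i, k ⟨j, i⟩) = d),
      (∏ p : Σ s : Fin n, Fin (κ s), (MvPolynomial.X p.1 : MvPolynomial (Fin n) F) ^ k p)
        = ∏ j, MvPolynomial.X j ^ d j := by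
    intro k hk
    rw [mem_filter] at hk
    rw [← Finset.univ_sigma_univ, Finset.prod_sigma]
    refine Finset.prod_congr rfl fun j _ => ?_
    simp only []
    rw [Finset.prod_pow_eq_pow_sum]
    exact congrArg _ (congrFun hk.2 j)
  rw [Finset.sum_congr rfl hterm, Finset.sum_const, fiber_card n κ m d hd,
    nsmul_eq_mul, Nat.cast_prod]
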